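/- arXiv:2302.01544 — 5 statements merged into one kernel-verified Lean document; each statement's English description precedes it below -/
import Mathlib

section
/- Fix μ₁ > κ_a > 0 and α_a > 1 with μ_a := κ_a α_a/(α_a−1) ≤ μ₁. Let Θ_a = {(κ,α) ∈ (0,κ_a]×(0,∞) : μ(κ,α) > μ₁}, where μ(κ,α) = κα/(α−1) for α>1 and μ(κ,α)=+∞ for α ≤ 1. Then inf over (κ,α) ∈ Θ_a of [log(α_a/α) + α·log(κ_a/κ) + α/α_a − 1] equals log(α_a (μ₁−κ_a)/μ₁) + (1/α_a)·μ₁/(μ₁−κ_a) − 1. -/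
open Real Set

/-- Closed form of `KL_inf`: the infimum over
`Θ_a = {(κ, α) ∈ (0, κ_a] × (0, ∞) : μ(κ, α) > μ₁}` (where `μ(κ,α) = κα/(α-1)` for
`α > 1` and `μ(κ,α) = ∞` for `α ≤ 1`) of the KL divergence
`log (α_a/α) + α log (κ_a/κ) + α/α_a - 1` equals
`log (α_a (μ₁ - κ_a)/μ₁) + (1/α_a)·μ₁/(μ₁ - κ_a) - 1`. -/
theorem KL_inf_closed_form (κa αa μ₁ : ℝ) (hκ : 0 < κa) (hκμ : κa < μ₁)
    (hα : 1 < αa) (hμ : κa * αa / (αa - 1) ≤ μ₁) :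
    IsGLB
      ((fun p : ℝ × ℝ => Real.log (αa / p.2) + p.2 * Real.log (κa / p.1) + p.2 / αa - 1) ''
        {p : ℝ × ℝ | 0 < p.1 ∧ p.1 ≤ κa ∧ 0 < p.2 ∧
          (p.2 ≤ 1 ∨ (1 < p.2 ∧ μ₁ < p.1 * p.2 / (p.2 - 1)))})
      (Real.log (αa * (μ₁ - κa) / μ₁) + (1 / αa) * (μ₁ / (μ₁ - κa)) - 1) := by
  have hμκ : 0 < μ₁ - κa := by linarith
  set A : ℝ := μ₁ / (μ₁ - κa) with hAdef
  have hA1 : 1 < A := (one_lt_div hμκ).mpr (by linarith)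
  have hA0 : 0 < A := by linarith
  have hαa0 : 0 < αa := by linarith
  have hμ' : κa * αa ≤ μ₁ * (αa - 1) := by
    have := (div_le_iff₀ (by linarith : (0:ℝ) < αa - 1)).mp hμ
    linarith
  have hAa : A ≤ αa := by
    rw [hAdef, div_le_iff₀ hμκ]
    nlinarith
  -- rewrite the target value as g(A)
  have hLrw : Real.log (αa * (μ₁ - κa) / μ₁) + (1 / αa) * (μ₁ / (μ₁ - κa)) - 1
      = Real.log (αa / A) + A / αa - 1 := by
    have h1 : αa * (μ₁ - κa) / μ₁ = αa / A := by
      rw [hAdef]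
      field_simp
    have h2 : (1 / αa) * (μ₁ / (μ₁ - κa)) = A / αa := by
      rw [hAdef]; ring
    rw [h1, h2]
  rw [hLrw]
  -- key monotonicity : g(A) ≤ g(α) for 0 < α ≤ A
  have key : ∀ α : ℝ, 0 < α → α ≤ A →
      Real.log (αa / A) + A / αa ≤ Real.log (αa / α) + α / αa := by
    intro α hα0 hαA
    have hlog : Real.log (α / A) ≤ α / A - 1 :=
      Real.log_le_sub_one_of_pos (div_pos hα0 hA0)
    rw [Real.log_div (ne_of_gt hα0) (ne_of_gt hA0)] at hlog
    rw [Real.log_div (ne_of_gt hαa0) (ne_of_gt hA0),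
        Real.log_div (ne_of_gt hαa0) (ne_of_gt hα0)]
    have h1 : α / A - 1 = -((A - α) / A) := by field_simp; ring
    have h2 : (A - α) / αa ≤ (A - α) / A :=
      div_le_div_of_nonneg_left (by linarith) hA0 hAa
    have h3 : A / αa - α / αa = (A - α) / αa := by ring
    -- need : log αa - log A + A/αa ≤ log αa - log α + α/αa
    -- i.e. (A-α)/αa ≤ log A - log α, and log A - log α ≥ (A-α)/A
    linarith
  constructor
  · -- lower bound
    rintro x ⟨⟨κ, α⟩, ⟨hκ0, hκa', hα0, hcase⟩, rfl⟩
    simp only at *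
    have hαA : α ≤ A := by
      rcases hcase with h1 | ⟨h1, h2⟩
      · linarith
      · have h3 := (lt_div_iff₀ (by linarith : (0:ℝ) < α - 1)).mp h2
        show α ≤ μ₁ / (μ₁ - κa)
        rw [le_div_iff₀ hμκ]
        nlinarith [mul_le_mul_of_nonneg_left hκa' hα0.le]
    have hlogκ : 0 ≤ Real.log (κa / κ) := Real.log_nonneg ((one_le_div hκ0).mpr hκa')
    have := key α hα0 hαA
    nlinarith [mul_nonneg hα0.le hlogκ]
  · -- greatest lower bound
    intro b hb
    refine le_of_forall_pos_le_add ?_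
    intro ε hε
    set δ : ℝ := min ε ((A - 1) / 2) with hδdef
    have hδ0 : 0 < δ := lt_min hε (by linarith)
    have hδε : δ ≤ ε := min_le_left _ _
    have hδA : δ < A - 1 := lt_of_le_of_lt (min_le_right _ _) (by linarith)
    set α : ℝ := A - δ with hαdef
    have hα1 : 1 < α := by rw [hαdef]; linarith
    have hαA : α < A := by rw [hαdef]; linarith
    have hα0 : 0 < α := by linarith
    have hmem : ((κa, α) : ℝ × ℝ) ∈ {p : ℝ × ℝ | 0 < p.1 ∧ p.1 ≤ κa ∧ 0 < p.2 ∧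
        (p.2 ≤ 1 ∨ (1 < p.2 ∧ μ₁ < p.1 * p.2 / (p.2 - 1)))} := by
      refine ⟨hκ, le_refl _, hα0, Or.inr ⟨hα1, ?_⟩⟩
      rw [lt_div_iff₀ (by linarith : (0:ℝ) < α - 1)]
      have : α * (μ₁ - κa) < μ₁ := (lt_div_iff₀ hμκ).mp hαA
      nlinarith
    have hble := hb ⟨(κa, α), hmem, rfl⟩
    simp only at hble
    rw [div_self (ne_of_gt hκ), Real.log_one, mul_zero, add_zero] at hble
    -- b ≤ log (αa/α) + α/αa - 1 ≤ log (αa/A) + A/αa - 1 + δ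
    have hgap : Real.log (αa / α) + α / αa ≤ Real.log (αa / A) + A / αa + δ := by
      have hlog : Real.log (A / α) ≤ A / α - 1 :=
        Real.log_le_sub_one_of_pos (div_pos hA0 hα0)
      rw [Real.log_div (ne_of_gt hA0) (ne_of_gt hα0)] at hlog
      rw [Real.log_div (ne_of_gt hαa0) (ne_of_gt hA0),
          Real.log_div (ne_of_gt hαa0) (ne_of_gt hα0)]
      have h1 : A / α - 1 = (A - α) / α := by field_simp
      have h2 : (A - α) / α ≤ A - α := div_le_self (by linarith) hα1.le
      have h3 : (α - A) / αa ≤ 0 := div_nonpos_of_nonpos_of_nonneg (by linarith) hαa0.le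
      have h4 : A - α = δ := by rw [hαdef]; ring
      have h5 : α / αa - A / αa = (α - A) / αa := by ring
      linarith
    linarith
end

section
/- Let Z follow the chi-squared distribution with 2n degrees of freedom. Then for any x ∈ (0,1), P[Z ≤ 2nx] ≤ exp(−n·h(x)) where h(x) = x − 1 − log x ≥ 0. -/
open MeasureTheory ProbabilityTheory Real Set

lemma chisq_aux (n : ℕ) (hn : 1 ≤ n) (x z : ℝ) (hx0 : 0 < x) (hx1 : x < 1)
    (hz0 : 0 ≤ z) (hz : z ≤ 2 * n * x) :
    gammaPDFReal n (1 / 2) z ≤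
      Real.exp ((n : ℝ) * (1 - x)) * x ^ n * gammaPDFReal n (1 / (2 * x)) z := by
  have hn0 : (0 : ℝ) ≤ n := Nat.cast_nonneg n
  simp only [gammaPDFReal, if_pos hz0]
  rw [Real.rpow_natCast, Real.rpow_natCast]
  have hG : 0 < Real.Gamma n := Real.Gamma_pos_of_pos (by exact_mod_cast hn)
  have hB : (0 : ℝ) ≤ (1 / 2 : ℝ) ^ n / Real.Gamma n * z ^ ((n : ℝ) - 1) := by
      have := Real.rpow_nonneg hz0 ((n : ℝ) - 1)
      positivity
  have hexp : Real.exp (-(1 / 2 * z)) ≤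
        Real.exp ((n : ℝ) * (1 - x)) * Real.exp (-(1 / (2 * x) * z)) := by
    rw [← Real.exp_add, Real.exp_le_exp]
    have h2x : (0 : ℝ) < 2 * x := by linarith
    have h1 : z * (1 - x) ≤ 2 * n * x * (1 - x) :=
      mul_le_mul_of_nonneg_right hz (by linarith)
    have h4 : (1 / (2 * x)) * (z * (1 - x)) ≤ (1 / (2 * x)) * (2 * n * x * (1 - x)) :=
      mul_le_mul_of_nonneg_left h1 (by positivity)
    have h5 : (1 / (2 * x)) * (2 * n * x * (1 - x)) = (n : ℝ) * (1 - x) := by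
      field_simp
    have h6 : (1 / (2 * x)) * (z * (1 - x)) = 1 / (2 * x) * z - 1/2 * z := by
      field_simp
    linarith
  have key : (1 / 2 : ℝ) ^ n / Real.Gamma n * z ^ ((n : ℝ) - 1) * Real.exp (-(1 / 2 * z)) ≤
      (1 / 2 : ℝ) ^ n / Real.Gamma n * z ^ ((n : ℝ) - 1) *
        (Real.exp ((n : ℝ) * (1 - x)) * Real.exp (-(1 / (2 * x) * z))) :=
    mul_le_mul_of_nonneg_left hexp hB
  refine key.trans (le_of_eq ?_)
  have hx2 : x ^ n * (1 / (2 * x)) ^ n = (1 / 2 : ℝ) ^ n := by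
    rw [← mul_pow]; congr 1; field_simp
  rw [← hx2]; ring

/-- Chernoff bound for the lower tail of the chi-squared distribution with `2n`
degrees of freedom (= Gamma with shape `n` and rate `1/2`): for `x ∈ (0,1)`,
`P[Z ≤ 2nx] ≤ exp (-n h(x))` with `h(x) = x - 1 - log x ≥ 0`. -/
theorem chisq_lower_tail (n : ℕ) (hn : 1 ≤ n) (x : ℝ) (hx0 : 0 < x) (hx1 : x < 1) :
    gammaMeasure n (1 / 2) (Set.Iic (2 * n * x))
        ≤ ENNReal.ofReal (Real.exp (-(n * (x - 1 - Real.log x)))) ∧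
      0 ≤ x - 1 - Real.log x := by
  refine ⟨?_, by linarith [Real.log_le_sub_one_of_pos hx0]⟩
  have hnpos : (0 : ℝ) < n := by exact_mod_cast hn
  set c : ℝ := Real.exp ((n : ℝ) * (1 - x)) * x ^ n with hc
  have hc0 : 0 ≤ c := by positivity
  have hmeas : Measurable (gammaPDF n (1 / (2 * x))) :=
    (measurable_gammaPDFReal _ _).ennreal_ofReal
  have hce : ENNReal.ofReal c = ENNReal.ofReal (Real.exp (-(n * (x - 1 - Real.log x)))) := by
    congr 1
    rw [hc]
    rw [show (x : ℝ) ^ n = Real.exp ((n : ℝ) * Real.log x) by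
      rw [Real.exp_nat_mul, Real.exp_log hx0]]
    rw [← Real.exp_add]
    congr 1
    ring
  rw [gammaMeasure, withDensity_apply _ measurableSet_Iic, ← hce]
  calc ∫⁻ z in Iic (2 * n * x), gammaPDF n (1 / 2) z
      ≤ ∫⁻ z in Iic (2 * n * x), ENNReal.ofReal c * gammaPDF n (1 / (2 * x)) z := by
        refine setLIntegral_mono (by fun_prop) fun z hz => ?_
        rcases lt_or_ge z 0 with h | h
        · simp [gammaPDF_of_neg h]
        · rw [gammaPDF_of_nonneg h, gammaPDF_of_nonneg h, ← ENNReal.ofReal_mul hc0]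
          exact ENNReal.ofReal_le_ofReal
            (by simpa [gammaPDFReal, if_pos h] using chisq_aux n hn x z hx0 hx1 h hz)
    _ = ENNReal.ofReal c * ∫⁻ z in Iic (2 * n * x), gammaPDF n (1 / (2 * x)) z :=
        lintegral_const_mul _ hmeas
    _ ≤ ENNReal.ofReal c * 1 := by
        gcongr
        rw [← lintegral_gammaPDF_eq_one (a := (n : ℝ)) (r := 1 / (2 * x)) hnpos (by positivity)]
        exact setLIntegral_le_lintegral _ _
    _ = ENNReal.ofReal c := mul_one _
end

section
/- The exponential distribution with rate α satisfies Bernstein's condition with parameter b = 1/α: for every integer k ≥ 3, the k-th central moment M_k of Exp(α) satisfies M_k ≤ (1/2)·k!·(1/α²)·(1/α)^{k−2}. -/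
open MeasureTheory ProbabilityTheory Real Set

private lemma aux_integrable_pow_exp {α : ℝ} (hα : 0 < α) (n : ℕ) :
    IntegrableOn (fun x : ℝ => x ^ n * Real.exp (-(α * x))) (Ioi 0) := by
  have h := integrableOn_rpow_mul_exp_neg_mul_rpow (p := 1) (s := (n : ℝ)) (b := α)
    (by exact_mod_cast neg_one_lt_zero.trans_le n.cast_nonneg) one_pos hα
  refine h.congr_fun (fun x hx => ?_) measurableSet_Ioi
  dsimp only
  rw [Real.rpow_natCast, Real.rpow_one, neg_mul]

private lemma aux_integral_pow_exp {α : ℝ} (hα : 0 < α) (n : ℕ) :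
    ∫ x in Ioi (0:ℝ), x ^ n * Real.exp (-(α * x)) = (n.factorial : ℝ) / α ^ (n + 1) := by
  have h := Real.integral_rpow_mul_exp_neg_mul_Ioi (a := (n : ℝ) + 1) (by positivity) hα
  rw [setIntegral_congr_fun measurableSet_Ioi
    (f := fun x : ℝ => x ^ n * Real.exp (-(α * x)))
    (g := fun x : ℝ => x ^ ((n : ℝ) + 1 - 1) * Real.exp (-(α * x)))
    (fun x hx => by rw [add_sub_cancel_right]; norm_num [Real.rpow_natCast]), h]
  rw [Real.Gamma_nat_eq_factorial]
  rw [show ((n : ℝ) + 1) = ((n + 1 : ℕ) : ℝ) by push_cast; ring, Real.rpow_natCast]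
  rw [one_div, inv_pow]
  ring

private lemma aux_pdf_eq_of_nonneg {α x : ℝ} (hx : 0 ≤ x) :
    exponentialPDFReal α x = α * Real.exp (-(α * x)) := by
  simp [exponentialPDFReal, gammaPDFReal, if_pos hx]

private lemma aux_pdf_of_neg {α x : ℝ} (hx : x < 0) :
    exponentialPDFReal α x = 0 := by
  simp [exponentialPDFReal, gammaPDFReal, if_neg (not_le.mpr hx)]

private lemma aux_expMeasure_integral (α : ℝ) (hα : 0 < α) (g : ℝ → ℝ) :
    ∫ x, g x ∂(expMeasure α) = ∫ x in Ioi 0, g x * (α * Real.exp (-(α * x))) := by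
  have h1 : expMeasure α
      = volume.withDensity (fun x => (Real.toNNReal (exponentialPDFReal α x) : ENNReal)) := rfl
  rw [h1, integral_withDensity_eq_integral_smul
    ((measurable_exponentialPDFReal α).real_toNNReal) g]
  have h2 : ∀ x : ℝ, (Real.toNNReal (exponentialPDFReal α x)) • g x
      = exponentialPDFReal α x * g x := fun x => by
    rw [NNReal.smul_def, Real.coe_toNNReal _ (exponentialPDFReal_nonneg hα x), smul_eq_mul]
  simp_rw [h2]
  rw [← setIntegral_eq_integral_of_forall_compl_eq_zero
    (s := Ici (0:ℝ)) (fun x hx => by rw [aux_pdf_of_neg (not_le.mp hx), zero_mul]),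
    integral_Ici_eq_integral_Ioi]
  exact setIntegral_congr_fun measurableSet_Ioi fun x hx => by
    rw [aux_pdf_eq_of_nonneg (le_of_lt hx), mul_comm]

private lemma aux_integrable_main {α : ℝ} (hα : 0 < α) (b : ℝ) (k : ℕ) :
    IntegrableOn (fun x : ℝ => (x - b) ^ k * (α * Real.exp (-(α * x)))) (Ioi 0) := by
  have h : (fun x : ℝ => (x - b) ^ k * (α * Real.exp (-(α * x))))
      = fun x => ∑ i ∈ Finset.range (k + 1),
        ((k.choose i : ℝ) * (-b) ^ (k - i) * α) * (x ^ i * Real.exp (-(α * x))) := by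
    funext x
    rw [sub_eq_add_neg, add_pow, Finset.sum_mul]
    exact Finset.sum_congr rfl fun i _ => by ring
  rw [h]
  exact integrable_finset_sum _ fun i _ => ((aux_integrable_pow_exp hα i).const_mul _)

private lemma aux_tail_integral {α b : ℝ} (hα : 0 < α) (k : ℕ) :
    ∫ x in Ioi b, (x - b) ^ k * (α * Real.exp (-(α * x)))
      = Real.exp (-(α * b)) * (k.factorial : ℝ) / α ^ k := by
  have hmp : MeasurePreserving (fun x : ℝ => x + b) volume volume :=
    measurePreserving_add_right volume b
  have hemb : MeasurableEmbedding (fun x : ℝ => x + b) :=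
    (MeasurableEquiv.addRight b).measurableEmbedding
  have hpre : (fun x : ℝ => x + b) ⁻¹' (Ioi b) = Ioi 0 := by
    ext x; simp [lt_add_iff_pos_left]
  have h := hmp.setIntegral_preimage_emb hemb
    (fun x => (x - b) ^ k * (α * Real.exp (-(α * x)))) (Ioi b)
  rw [hpre] at h
  rw [← h]
  have heq : ∀ x ∈ Ioi (0:ℝ), (x + b - b) ^ k * (α * Real.exp (-(α * (x + b))))
      = (α * Real.exp (-(α * b))) * (x ^ k * Real.exp (-(α * x))) := by
    intro x hx
    rw [add_sub_cancel_right, mul_add, neg_add, Real.exp_add]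
    ring
  rw [setIntegral_congr_fun measurableSet_Ioi heq, integral_const_mul,
    aux_integral_pow_exp hα k]
  field_simp
  ring

private lemma aux_exp_integral_Ioc {α b : ℝ} (hα : 0 < α) (hb : 0 ≤ b) :
    ∫ x in Ioc (0:ℝ) b, α * Real.exp (-(α * x)) = 1 - Real.exp (-(α * b)) := by
  rw [← intervalIntegral.integral_of_le hb]
  rw [intervalIntegral.integral_eq_sub_of_hasDerivAt
    (f := fun x : ℝ => -Real.exp (-(α * x)))
    (fun x _ => hasDerivAt_neg_exp_mul_exp)
    (Continuous.intervalIntegrable (by continuity) 0 b)]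
  simp
  ring

/-- Bernstein's condition for the exponential distribution with rate `α`:
for every `k ≥ 3`, the `k`-th central moment satisfies
`M_k ≤ (1/2) k! (1/α²) (1/α)^(k-2)`. -/
theorem exp_bernstein_condition (α : ℝ) (hα : 0 < α) (k : ℕ) (hk : 3 ≤ k) :
    ∫ x, (x - 1 / α) ^ k ∂(expMeasure α)
      ≤ (1 / 2) * (k.factorial : ℝ) * (1 / α ^ 2) * (1 / α) ^ (k - 2) := by
  set b : ℝ := 1 / α with hbdef
  have hb : 0 < b := by positivity
  have hab : α * b = 1 := by
    rw [hbdef]; field_simp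
  -- rewrite the integral
  rw [aux_expMeasure_integral α hα (fun x => (x - b) ^ k)]
  set f : ℝ → ℝ := fun x => (x - b) ^ k * (α * Real.exp (-(α * x))) with hf
  have hint : IntegrableOn f (Ioi 0) := aux_integrable_main hα b k
  -- split the domain
  have hsplit : ∫ x in Ioi (0:ℝ), f x
      = (∫ x in Ioc (0:ℝ) b, f x) + ∫ x in Ioi b, f x := by
    rw [← setIntegral_union (Set.Ioc_disjoint_Ioi le_rfl) measurableSet_Ioi
      (hint.mono_set Ioc_subset_Ioi_self) (hint.mono_set (Ioi_subset_Ioi hb.le)),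
      Set.Ioc_union_Ioi_eq_Ioi hb.le]
  rw [hsplit]
  -- bound the first piece
  have h1 : ∫ x in Ioc (0:ℝ) b, f x ≤ b ^ k * (1 - Real.exp (-(α * b))) := by
    have hmono : ∫ x in Ioc (0:ℝ) b, f x
        ≤ ∫ x in Ioc (0:ℝ) b, b ^ k * (α * Real.exp (-(α * x))) := by
      refine setIntegral_mono_on (hint.mono_set Ioc_subset_Ioi_self)
        (Continuous.integrableOn_Ioc (by continuity)) measurableSet_Ioc ?_
      intro x hx
      have hle : (x - b) ^ k ≤ b ^ k := by
        calc (x - b) ^ k ≤ |x - b| ^ k := by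
              rw [← abs_pow]; exact le_abs_self _
          _ ≤ b ^ k := by
              apply pow_le_pow_left₀ (abs_nonneg _)
              rw [abs_sub_comm, abs_of_nonneg (by linarith [hx.2])]
              linarith [hx.1]
      exact mul_le_mul_of_nonneg_right hle (by positivity)
    calc ∫ x in Ioc (0:ℝ) b, f x
        ≤ ∫ x in Ioc (0:ℝ) b, b ^ k * (α * Real.exp (-(α * x))) := hmono
      _ = b ^ k * (1 - Real.exp (-(α * b))) := by
          rw [integral_const_mul, aux_exp_integral_Ioc hα hb.le]
  -- second piece is exact
  have h2 : ∫ x in Ioi b, f x = Real.exp (-(α * b)) * (k.factorial : ℝ) / α ^ k :=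
    aux_tail_integral hα k
  rw [h2, hab]
  have hbk : b ^ k = 1 / α ^ k := by rw [hbdef, div_pow, one_pow]
  have hfact : (6 : ℝ) ≤ (k.factorial : ℝ) := by
    exact_mod_cast Nat.factorial_le hk
  have he : Real.exp (-1) < 0.3679 := by
    rw [Real.exp_neg]
    rw [inv_lt_comm₀ (Real.exp_pos 1) (by norm_num)]
    calc (0.3679 : ℝ)⁻¹ < 2.7182818283 := by norm_num
      _ < Real.exp 1 := Real.exp_one_gt_d9
  have hepos : (0:ℝ) < Real.exp (-1) := Real.exp_pos _
  have hαk : (0:ℝ) < α ^ k := by positivity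
  have hRHS : (1 / 2) * (k.factorial : ℝ) * (1 / α ^ 2) * (1 / α) ^ (k - 2)
      = ((k.factorial : ℝ) / 2) / α ^ k := by
    have hxp : α ^ k = α ^ 2 * α ^ (k - 2) := by
      rw [← pow_add]; congr 1; omega
    rw [hxp, div_pow, one_pow]
    field_simp
    all_goals try ring
    all_goals exact Or.inl trivial
  rw [hRHS]
  have h1' : ∫ x in Ioc (0:ℝ) b, f x ≤ (1 - Real.exp (-1)) / α ^ k := by
    refine le_of_le_of_eq ?_ (by rw [hbk, hab]; ring : b ^ k * (1 - Real.exp (-(α * b))) = (1 - Real.exp (-1)) / α ^ k)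
    exact h1
  have key : (1 - Real.exp (-1)) / α ^ k + Real.exp (-1) * (k.factorial : ℝ) / α ^ k
      ≤ ((k.factorial : ℝ) / 2) / α ^ k := by
    rw [← add_div, div_le_div_iff_of_pos_right hαk]
    nlinarith [hfact, he, hepos]
  linarith [h1', key]
end

section
/- The unique solution c* ≥ 1 of the equation aμ·c·log c + (μ − aμ)c = −aκ, where μ > κ > 0, a > 1, and (κ/μ)e^{1/a−1} ≤ e^{−1}, is given by c* = exp(W(−(κ/μ)e^{1/a−1}) + 1 − 1/a), where W is the principal branch of the Lambert W function; moreover c* ≥ 1. -/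
open Real

lemma texp_strictMonoOn : StrictMonoOn (fun t : ℝ => t * Real.exp t) (Set.Ici (-1 : ℝ)) := by
  apply strictMonoOn_of_deriv_pos (convex_Ici _)
  · exact (continuous_id.mul Real.continuous_exp).continuousOn
  · intro x hx
    rw [interior_Ici] at hx
    have h : HasDerivAt (fun t : ℝ => t * Real.exp t) (1 * Real.exp x + x * Real.exp x) x :=
      (hasDerivAt_id x).mul (Real.hasDerivAt_exp x)
    rw [h.deriv]
    have := Real.exp_pos x
    have hx' : -1 < x := hx
    nlinarith

/-- The unique solution `c* ≥ 1` of `aμ c log c + (μ - aμ) c = -aκ` is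
`c* = exp (W + 1 - 1/a)`, where `W` is the value of the principal branch of the
Lambert W function at `-(κ/μ) e^(1/a - 1)` (characterized by `w ≥ -1` and
`w e^w = -(κ/μ) e^(1/a - 1)`); moreover `c* ≥ 1`. -/
theorem lambert_solution (a μ κ w : ℝ) (hκ : 0 < κ) (hκμ : κ < μ) (ha : 1 < a)
    (hμa : κ * a / (a - 1) ≤ μ)
    (harg : (κ / μ) * Real.exp (1 / a - 1) ≤ Real.exp (-1))
    (hw : -1 ≤ w)
    (hW : w * Real.exp w = -((κ / μ) * Real.exp (1 / a - 1))) :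
    a * μ * Real.exp (w + 1 - 1 / a) * Real.log (Real.exp (w + 1 - 1 / a)) +
        (μ - a * μ) * Real.exp (w + 1 - 1 / a) = -(a * κ) ∧
      1 ≤ Real.exp (w + 1 - 1 / a) ∧
      ∀ c : ℝ, 1 ≤ c → a * μ * c * Real.log c + (μ - a * μ) * c = -(a * κ) →
        c = Real.exp (w + 1 - 1 / a) := by
  have hμ0 : (0:ℝ) < μ := hκ.trans hκμ
  have ha0 : (0:ℝ) < a := by linarith
  have hκμ' : μ * (κ / μ) = κ := by field_simp
  have h2 : Real.exp (1/a - 1) * Real.exp (1 - 1/a) = 1 := by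
    rw [← Real.exp_add, show 1/a - 1 + (1 - 1/a) = (0:ℝ) by ring, Real.exp_zero]
  have key1 : μ * (w * Real.exp (w + 1 - 1/a)) = -κ := by
    rw [show w + 1 - 1/a = w + (1 - 1/a) by ring, Real.exp_add]
    linear_combination (μ * Real.exp (1 - 1/a)) * hW -
      (Real.exp (1/a - 1) * Real.exp (1 - 1/a)) * hκμ' - κ * h2
  have h1 : κ * a ≤ μ * (a - 1) := by
    rw [div_le_iff₀ (by linarith : (0:ℝ) < a - 1)] at hμa; linarith
  have hxw : 1/a - 1 ≤ w := by
    by_contra h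
    push_neg at h
    have hxmem : (1/a - 1 : ℝ) ∈ Set.Ici (-1:ℝ) := by
      have : (0:ℝ) < 1/a := by positivity
      simp only [Set.mem_Ici]; linarith
    have hlt := texp_strictMonoOn (Set.mem_Ici.mpr hw) hxmem h
    simp only at hlt
    rw [hW] at hlt
    have hX := Real.exp_pos (1/a - 1)
    -- from hlt : -(κ/μ * eX) < (1/a - 1) * eX
    have h3 : 1 - 1/a < κ/μ := by nlinarith
    have h4 : a * (1/a) = 1 := by field_simp
    nlinarith [mul_lt_mul_of_pos_left h3 hμ0, mul_pos hμ0 (by positivity : (0:ℝ) < 1/a)]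
  have h4 : a * (1/a) = 1 := by field_simp
  refine ⟨?_, ?_, ?_⟩
  · rw [Real.log_exp]
    linear_combination a * key1 - (μ * Real.exp (w + 1 - 1/a)) * h4
  · have : (0:ℝ) ≤ w + 1 - 1/a := by linarith
    calc (1:ℝ) = Real.exp 0 := Real.exp_zero.symm
    _ ≤ _ := Real.exp_le_exp.mpr this
  · intro c hc heq
    have hc0 : (0:ℝ) < c := by linarith
    set v : ℝ := Real.log c + 1/a - 1 with hv_def
    have hva : a * v = a * Real.log c + 1 - a := by
      rw [hv_def]; field_simp
    have h3 : μ * (c * (a * Real.log c + 1 - a)) = -(a * κ) := by linear_combination heq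
    have hev : Real.exp v = c * Real.exp (1/a - 1) := by
      rw [show v = Real.log c + (1/a - 1) by rw [hv_def]; ring, Real.exp_add,
        Real.exp_log hc0]
    have key2 : v * Real.exp v = w * Real.exp w := by
      have hamu : a * μ ≠ 0 := by positivity
      apply mul_left_cancel₀ hamu
      rw [hev, hW]
      linear_combination (μ * c * Real.exp (1/a - 1)) * hva +
        (Real.exp (1/a - 1)) * h3 + (a * Real.exp (1/a - 1)) * hκμ'
    have hvmem : v ∈ Set.Ici (-1:ℝ) := by
      have hl := Real.log_nonneg hc
      have : (0:ℝ) < 1/a := by positivity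
      simp only [Set.mem_Ici, hv_def]; linarith
    have hvw : v = w := texp_strictMonoOn.injOn hvmem (Set.mem_Ici.mpr hw) key2
    have : w + 1 - 1/a = Real.log c := by rw [← hvw, hv_def]; ring
    rw [this, Real.exp_log hc0]
end

section
/- Fix μ₁ > κ_a > 0 and α_a > 1 with μ_a = κ_a α_a/(α_a−1) ≤ μ₁, and define h_a(c) = cμ₁/(cμ₁ − κ_a) and g_a(α,c) = log(α_a/α) + α log c + α/α_a − 1. Then the map c ↦ g_a(h_a(c), c) is increasing on [1,∞), and hence its infimum over c ≥ 1 is attained at c = 1 with value log(α_a(μ₁−κ_a)/μ₁) + (1/α_a)·μ₁/(μ₁−κ_a) − 1. -/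
open Real Set

/-- With `h_a(c) = cμ₁/(cμ₁ - κ_a)` and
`g_a(α, c) = log (α_a/α) + α log c + α/α_a - 1`, the map `c ↦ g_a(h_a(c), c)` is
(strictly) increasing on `[1, ∞)`; hence its infimum over `c ≥ 1` is attained at
`c = 1`, with value `log (α_a (μ₁ - κ_a)/μ₁) + (1/α_a)·μ₁/(μ₁ - κ_a) - 1`. -/
theorem g_comp_h_monotone (κa αa μ₁ : ℝ) (hκ : 0 < κa) (hκμ : κa < μ₁)
    (hα : 1 < αa) (hμ : κa * αa / (αa - 1) ≤ μ₁) :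
    StrictMonoOn
        (fun c : ℝ =>
          Real.log (αa / (c * μ₁ / (c * μ₁ - κa))) +
            (c * μ₁ / (c * μ₁ - κa)) * Real.log c +
            (c * μ₁ / (c * μ₁ - κa)) / αa - 1)
        (Set.Ici 1) ∧
      IsLeast
        ((fun c : ℝ =>
          Real.log (αa / (c * μ₁ / (c * μ₁ - κa))) +
            (c * μ₁ / (c * μ₁ - κa)) * Real.log c +
            (c * μ₁ / (c * μ₁ - κa)) / αa - 1) '' Set.Ici 1)
        (Real.log (αa * (μ₁ - κa) / μ₁) + (1 / αa) * (μ₁ / (μ₁ - κa)) - 1) := by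
  have hμ₁ : 0 < μ₁ := hκ.trans hκμ
  have hαa : (0:ℝ) < αa := lt_trans one_pos hα
  set f : ℝ → ℝ := fun c =>
      Real.log (αa / (c * μ₁ / (c * μ₁ - κa))) +
        (c * μ₁ / (c * μ₁ - κa)) * Real.log c +
        (c * μ₁ / (c * μ₁ - κa)) / αa - 1 with hf
  -- derivative function
  set F : ℝ → ℝ := fun c =>
      ((0 * (c * μ₁ / (c * μ₁ - κa)) -
          αa * ((μ₁ * (c * μ₁ - κa) - c * μ₁ * μ₁) / (c * μ₁ - κa) ^ 2)) /
          (c * μ₁ / (c * μ₁ - κa)) ^ 2) / (αa / (c * μ₁ / (c * μ₁ - κa))) +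
        ((μ₁ * (c * μ₁ - κa) - c * μ₁ * μ₁) / (c * μ₁ - κa) ^ 2 * Real.log c +
          c * μ₁ / (c * μ₁ - κa) * c⁻¹) +
        (μ₁ * (c * μ₁ - κa) - c * μ₁ * μ₁) / (c * μ₁ - κa) ^ 2 / αa with hF
  have basic : ∀ c : ℝ, 1 ≤ c → 0 < c ∧ 0 < c * μ₁ - κa := by
    intro c hc
    have hc0 : (0:ℝ) < c := lt_of_lt_of_le one_pos hc
    constructor
    · exact hc0
    · nlinarith
  have hderiv : ∀ c : ℝ, 1 ≤ c → HasDerivAt f (F c) c := by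
    intro c hc
    obtain ⟨hc0, hd0⟩ := basic c hc
    have hd0' : c * μ₁ - κa ≠ 0 := ne_of_gt hd0
    have hh : HasDerivAt (fun c : ℝ => c * μ₁ / (c * μ₁ - κa))
        ((μ₁ * (c * μ₁ - κa) - c * μ₁ * μ₁) / (c * μ₁ - κa) ^ 2) c := by
      have := ((hasDerivAt_id c).mul_const μ₁).div
        (((hasDerivAt_id c).mul_const μ₁).sub_const κa) hd0'
      simp at this
      exact this
    have hpos : 0 < c * μ₁ / (c * μ₁ - κa) := div_pos (by positivity) hd0
    have hne : c * μ₁ / (c * μ₁ - κa) ≠ 0 := ne_of_gt hpos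
    have hane : αa / (c * μ₁ / (c * μ₁ - κa)) ≠ 0 := by positivity
    have h1 : HasDerivAt (fun c : ℝ => Real.log (αa / (c * μ₁ / (c * μ₁ - κa))))
        (((0 * (c * μ₁ / (c * μ₁ - κa)) -
          αa * ((μ₁ * (c * μ₁ - κa) - c * μ₁ * μ₁) / (c * μ₁ - κa) ^ 2)) /
          (c * μ₁ / (c * μ₁ - κa)) ^ 2) / (αa / (c * μ₁ / (c * μ₁ - κa)))) c :=
      (((hasDerivAt_const c αa).div hh hne).log hane)
    have h2 : HasDerivAt (fun c : ℝ => (c * μ₁ / (c * μ₁ - κa)) * Real.log c)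
        ((μ₁ * (c * μ₁ - κa) - c * μ₁ * μ₁) / (c * μ₁ - κa) ^ 2 * Real.log c +
          c * μ₁ / (c * μ₁ - κa) * c⁻¹) c :=
      hh.mul (Real.hasDerivAt_log (ne_of_gt hc0))
    have h3 : HasDerivAt (fun c : ℝ => (c * μ₁ / (c * μ₁ - κa)) / αa)
        ((μ₁ * (c * μ₁ - κa) - c * μ₁ * μ₁) / (c * μ₁ - κa) ^ 2 / αa) c :=
      hh.div_const αa
    exact ((h1.add h2).add h3).sub_const 1
  have hFpos : ∀ c : ℝ, 1 ≤ c → 0 < F c := by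
    intro c hc
    obtain ⟨hc0, hd0⟩ := basic c hc
    have hlog : Real.log c ≤ c - 1 := by
      have := Real.log_le_sub_one_of_pos hc0
      linarith
    have hlog0 : 0 ≤ Real.log c := Real.log_nonneg hc
    have hαμ : κa / (αa - 1) ≤ μ₁ - κa := by
      rw [div_le_iff₀ (by linarith)] at hμ ⊢
      nlinarith
    -- key numerator positivity
    have hnum : 0 < (c * μ₁) ^ 2 - κa ^ 2 - κa * (c * μ₁) * Real.log c -
        κa * (c * μ₁) / αa := by
      have h1 : κa * Real.log c ≤ μ₁ * (c - 1) := by nlinarith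
      have h2 : κa / αa < μ₁ - κa := by
        have : κa / αa < κa / (αa - 1) := by
          apply div_lt_div_of_pos_left hκ (by linarith) (by linarith)
        linarith
      have h3 : κa * (c * μ₁) / αa < (c * μ₁) * (μ₁ - κa) := by
        rw [div_lt_iff₀ hαa]
        calc κa * (c * μ₁) = (κa / αa) * (c * μ₁) * αa := by field_simp
          _ < (μ₁ - κa) * (c * μ₁) * αa := by
              apply mul_lt_mul_of_pos_right (mul_lt_mul_of_pos_right h2 (by positivity)) hαa
          _ = c * μ₁ * (μ₁ - κa) * αa := by ring
      nlinarith [mul_le_mul_of_nonneg_left h1 (le_of_lt (mul_pos hc0 hμ₁))]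
    have hFeq : F c = ((c * μ₁) * ((c * μ₁) ^ 2 - κa ^ 2 -
        κa * (c * μ₁) * Real.log c - κa * (c * μ₁) / αa)) /
        (c * (c * μ₁) * (c * μ₁ - κa) ^ 2) := by
      rw [hF]
      have hc0' : c ≠ 0 := ne_of_gt hc0
      have hd0' : c * μ₁ - κa ≠ 0 := ne_of_gt hd0
      field_simp
      ring
    rw [hFeq]
    apply div_pos
    · exact mul_pos (by positivity) hnum
    · positivity
  have hmono : StrictMonoOn f (Set.Ici 1) := by
    apply strictMonoOn_of_hasDerivWithinAt_pos (convex_Ici 1) (f' := F)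
    · intro x hx
      exact (hderiv x hx).continuousAt.continuousWithinAt
    · intro x hx
      rw [interior_Ici] at hx
      exact (hderiv x (le_of_lt hx)).hasDerivWithinAt
    · intro x hx
      rw [interior_Ici] at hx
      exact hFpos x (le_of_lt hx)
  have hf1 : f 1 = Real.log (αa * (μ₁ - κa) / μ₁) + 1 / αa * (μ₁ / (μ₁ - κa)) - 1 := by
    have hd : μ₁ - κa ≠ 0 := by linarith
    simp only [hf, one_mul, Real.log_one, mul_zero]
    rw [show αa / (μ₁ / (μ₁ - κa)) = αa * (μ₁ - κa) / μ₁ by field_simp]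
    have : μ₁ / (μ₁ - κa) / αa = 1 / αa * (μ₁ / (μ₁ - κa)) := by ring
    rw [this]
    ring
  refine ⟨hmono, ⟨1, self_mem_Ici, hf1⟩, ?_⟩
  rintro y ⟨c, hc, rfl⟩
  have := hmono.monotoneOn self_mem_Ici hc hc
  rw [hf1] at this
  exact this
end
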